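/- Let $D = \{|x| < r_1\}$ and $\Omega = \{|x| < r_2\}$ be concentric disks in $\mathbb{R}^2$ with $0 < r_1 < r_2$, with scalar conductivities $\sigma_c$ in $D$, $\sigma_s$ in $\Omega \setminus D$, $\sigma_m$ in $\mathbb{R}^2 \setminus \Omega$ (all positive). Set $f = r_1^2/r_2^2$. If $(\sigma_s + \sigma_c)(\sigma_m - \sigma_s) + f(\sigma_s - \sigma_c)(\sigma_m + \sigma_s) = 0$, then for each unit vector $a$ the function $u$ defined by $u(x) = a\cdot x$ for $|x| \geq r_2$, $u(x) = \alpha\, a\cdot x + \beta\, \frac{a\cdot x}{|x|^2}$ for $r_1 \leq |x| \leq r_2$, and $u(x) = \gamma\, a\cdot x$ for $|x| \leq r_1$, with appropriate constants $\alpha, \beta, \gamma$, is continuous, harmonic in each region, and has continuous flux $\sigma \partial_\nu u$ across both interfaces; i.e., the coated disk is neutral to all uniform fields. -/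

import Mathlib

/-- The Laplacian of a function `u : ℂ → ℝ`, viewing `ℂ ≅ ℝ²` with directions `1` and `I`. -/
noncomputable def lap (u : ℂ → ℝ) (z : ℂ) : ℝ :=
  fderiv ℝ (fun w => fderiv ℝ u w 1) z 1 +
    fderiv ℝ (fun w => fderiv ℝ u w Complex.I) z Complex.I

open Complex

private lemma reHolo {g : ℂ → ℂ} {g' z : ℂ} (h : HasDerivAt g g' z) :
    HasFDerivAt (fun x => (g x).re)
      (Complex.reCLM.comp
        ((ContinuousLinearMap.smulRight (1 : ℂ →L[ℂ] ℂ) g').restrictScalars ℝ)) z :=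
  Complex.reCLM.hasFDerivAt.comp z (h.hasFDerivAt.restrictScalars ℝ)

private lemma fderiv_reHolo {g : ℂ → ℂ} {g' z : ℂ} (h : HasDerivAt g g' z) (v : ℂ) :
    fderiv ℝ (fun x => (g x).re) z v = (v * g').re := by
  rw [(reHolo h).fderiv]
  simp

private lemma hasDeriv_g (c d z : ℂ) (hz : z ≠ 0) :
    HasDerivAt (fun w => c * w + d * w⁻¹) (c - d * z⁻¹ ^ 2) z := by
  have h1 : HasDerivAt (fun w : ℂ => c * w) c z := by
    simpa using (hasDerivAt_id z).const_mul c
  have h2 : HasDerivAt (fun w : ℂ => d * w⁻¹) (d * (-(z ^ 2)⁻¹)) z :=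
    (hasDerivAt_inv hz).const_mul d
  have := h1.add h2
  rw [show c - d * z⁻¹ ^ 2 = c + d * (-(z ^ 2)⁻¹) by ring]
  exact this

private lemma hasDeriv_G (c d z : ℂ) (hz : z ≠ 0) :
    HasDerivAt (fun w => c - d * w⁻¹ ^ 2) (2 * d * z⁻¹ ^ 3) z := by
  have h2 : HasDerivAt (fun w : ℂ => w⁻¹ ^ 2) ((2 : ℕ) * z⁻¹ ^ 1 * (-(z ^ 2)⁻¹)) z :=
    (hasDerivAt_inv hz).pow 2
  have := (hasDerivAt_const z c).sub (h2.const_mul d)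
  rw [show 2 * d * z⁻¹ ^ 3 = 0 - d * (((2 : ℕ) : ℂ) * z⁻¹ ^ 1 * (-(z ^ 2)⁻¹)) by push_cast; ring]
  exact this

private lemma lap_holo (c d x : ℂ) (hx : x ≠ 0) :
    lap (fun w => (c * w + d * w⁻¹).re) x = 0 := by
  have hnhds : {w : ℂ | w ≠ 0} ∈ nhds x := (isOpen_compl_singleton).mem_nhds hx
  have hF1 : (fun w => fderiv ℝ (fun w => (c * w + d * w⁻¹).re) w 1)
      =ᶠ[nhds x] fun w => ((c - d * w⁻¹ ^ 2) * 1).re := by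
    filter_upwards [hnhds] with w hw
    simpa [mul_comm] using fderiv_reHolo (hasDeriv_g c d w hw) 1
  have hFI : (fun w => fderiv ℝ (fun w => (c * w + d * w⁻¹).re) w Complex.I)
      =ᶠ[nhds x] fun w => (Complex.I * (c - d * w⁻¹ ^ 2)).re := by
    filter_upwards [hnhds] with w hw
    simpa using fderiv_reHolo (hasDeriv_g c d w hw) Complex.I
  have hG1 : HasDerivAt (fun w => (c - d * w⁻¹ ^ 2) * 1) (2 * d * x⁻¹ ^ 3) x := by
    simpa using hasDeriv_G c d x hx
  have hGI : HasDerivAt (fun w => Complex.I * (c - d * w⁻¹ ^ 2))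
      (Complex.I * (2 * d * x⁻¹ ^ 3)) x :=
    (hasDeriv_G c d x hx).const_mul Complex.I
  unfold lap
  rw [hF1.fderiv_eq, hFI.fderiv_eq, fderiv_reHolo hG1 1, fderiv_reHolo hGI Complex.I]
  simp [Complex.mul_re]

private lemma lap_lin (c : ℂ) (x : ℂ) : lap (fun w => (c * w).re) x = 0 := by
  have h : ∀ w : ℂ, HasDerivAt (fun w : ℂ => c * w) c w := fun w => by
    simpa using (hasDerivAt_id w).const_mul c
  have e1 : (fun w => fderiv ℝ (fun w => (c * w).re) w 1) = fun _ => ((1 : ℂ) * c).re :=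
    funext fun w => fderiv_reHolo (h w) 1
  have eI : (fun w => fderiv ℝ (fun w => (c * w).re) w Complex.I)
      = fun _ => (Complex.I * c).re :=
    funext fun w => fderiv_reHolo (h w) Complex.I
  unfold lap
  rw [e1, eI]
  simp

private lemma rep (a : ℂ) (s t : ℝ) (x : ℂ) :
    s * (a.re * x.re + a.im * x.im) + t * (a.re * x.re + a.im * x.im) / ‖x‖ ^ 2
      = (((s : ℂ) * (starRingEnd ℂ) a) * x + ((t : ℂ) * a) * x⁻¹).re := by
  rcases eq_or_ne x 0 with h | h
  · simp [h]
  · have hn : x.re * x.re + x.im * x.im ≠ 0 := by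
      have := Complex.normSq_pos.mpr h
      rw [Complex.normSq_apply] at this
      linarith
    rw [Complex.sq_norm, Complex.normSq_apply]
    simp only [Complex.add_re, Complex.mul_re, Complex.mul_im, Complex.inv_re, Complex.inv_im,
      Complex.normSq_apply, Complex.ofReal_re, Complex.ofReal_im, Complex.conj_re, Complex.conj_im]
    field_simp
    ring

private lemma lin_rep (a : ℂ) (s : ℝ) (x : ℂ) :
    s * (a.re * x.re + a.im * x.im) = (((s : ℂ) * (starRingEnd ℂ) a) * x).re := by
  simp only [Complex.mul_re, Complex.mul_im, Complex.ofReal_re, Complex.ofReal_im,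
    Complex.conj_re, Complex.conj_im]
  ring

private lemma fderiv_rad (a : ℂ) (s t : ℝ) (x : ℂ) (hx : x ≠ 0) :
    fderiv ℝ (fun w => (((s : ℂ) * (starRingEnd ℂ) a) * w + ((t : ℂ) * a) * w⁻¹).re) x x
      = s * (a.re * x.re + a.im * x.im)
        - t * (a.re * x.re + a.im * x.im) / ‖x‖ ^ 2 := by
  rw [fderiv_reHolo (hasDeriv_g _ _ x hx) x]
  have hn : x.re * x.re + x.im * x.im ≠ 0 := by
    have := Complex.normSq_pos.mpr hx
    rw [Complex.normSq_apply] at this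
    linarith
  rw [Complex.sq_norm, Complex.normSq_apply]
  simp only [Complex.mul_re, Complex.mul_im, Complex.sub_re, Complex.sub_im, Complex.inv_re,
    Complex.inv_im, Complex.normSq_apply, Complex.ofReal_re, Complex.ofReal_im,
    Complex.conj_re, Complex.conj_im, pow_two]
  have hn2 : x.re ^ 2 + x.im ^ 2 ≠ 0 := by rw [pow_two, pow_two]; exact hn
  field_simp
  ring


theorem stmt7 (r1 r2 σc σs σm : ℝ) (hr1 : 0 < r1) (hr12 : r1 < r2)
    (hσc : 0 < σc) (hσs : 0 < σs) (hσm : 0 < σm)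
    (hneutral : (σs + σc) * (σm - σs) + (r1 ^ 2 / r2 ^ 2) * (σs - σc) * (σm + σs) = 0)
    (a : ℂ) (ha : ‖a‖ = 1) :
    ∃ α β γ : ℝ,
      letI dot : ℂ → ℝ := fun x => a.re * x.re + a.im * x.im
      letI uout : ℂ → ℝ := fun x => dot x
      letI umid : ℂ → ℝ := fun x => α * dot x + β * dot x / ‖x‖ ^ 2
      letI uin : ℂ → ℝ := fun x => γ * dot x
      -- continuity of the potential across the interfaces
      (∀ x : ℂ, ‖x‖ = r2 → umid x = uout x) ∧
      (∀ x : ℂ, ‖x‖ = r1 → uin x = umid x) ∧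
      -- harmonicity in each region
      (∀ x : ℂ, r2 < ‖x‖ → lap uout x = 0) ∧
      (∀ x : ℂ, r1 < ‖x‖ → ‖x‖ < r2 → lap umid x = 0) ∧
      (∀ x : ℂ, ‖x‖ < r1 → lap uin x = 0) ∧
      -- continuity of the flux `σ ∂u/∂ν` across the interfaces (normal direction `x`)
      (∀ x : ℂ, ‖x‖ = r2 → σm * fderiv ℝ uout x x = σs * fderiv ℝ umid x x) ∧
      (∀ x : ℂ, ‖x‖ = r1 → σs * fderiv ℝ umid x x = σc * fderiv ℝ uin x x) := by
  have hr2 : (0:ℝ) < r2 := hr1.trans hr12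
  have hr1' : r1 ≠ 0 := ne_of_gt hr1
  have hr2' : r2 ≠ 0 := ne_of_gt hr2
  have hσs' : σs ≠ 0 := ne_of_gt hσs
  set α : ℝ := (σs + σm) / (2 * σs) with hα
  set β : ℝ := r2 ^ 2 * (σs - σm) / (2 * σs) with hβ
  set γ : ℝ := α + β / r1 ^ 2 with hγ
  field_simp at hneutral
  refine ⟨α, β, γ, ?_, ?_, ?_, ?_, ?_, ?_, ?_⟩
  · -- continuity at r2
    intro x hx
    beta_reduce
    rw [hx, hα, hβ]
    field_simp
    ring
  · -- continuity at r1
    intro x hx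
    beta_reduce
    rw [hx, hγ]
    ring
  · -- lap uout
    intro x _
    have hu : (fun x : ℂ => a.re * x.re + a.im * x.im)
        = fun w => ((starRingEnd ℂ) a * w).re := by
      funext w
      simp [Complex.mul_re]
    beta_reduce
    rw [hu]
    exact lap_lin _ x
  · -- lap umid
    intro x hx1 _
    have hx : x ≠ 0 := by
      intro h
      rw [h] at hx1
      simp at hx1
      linarith
    have hu : (fun x : ℂ => α * (a.re * x.re + a.im * x.im)
          + β * (a.re * x.re + a.im * x.im) / ‖x‖ ^ 2)
        = fun w => (((α : ℂ) * (starRingEnd ℂ) a) * w + ((β : ℂ) * a) * w⁻¹).re :=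
      funext fun w => rep a α β w
    beta_reduce
    rw [hu]
    exact lap_holo _ _ x hx
  · -- lap uin
    intro x _
    have hu : (fun x : ℂ => γ * (a.re * x.re + a.im * x.im))
        = fun w => (((γ : ℂ) * (starRingEnd ℂ) a) * w).re :=
      funext fun w => lin_rep a γ w
    beta_reduce
    rw [hu]
    exact lap_lin _ x
  · -- flux at r2
    intro x hx
    have hx0 : x ≠ 0 := by
      intro h
      rw [h] at hx
      simp at hx
      exact hr2' hx.symm
    have hu : (fun x : ℂ => a.re * x.re + a.im * x.im)
        = fun w => ((((1:ℝ) : ℂ) * (starRingEnd ℂ) a) * w + (((0:ℝ) : ℂ) * a) * w⁻¹).re := by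
      funext w
      rw [← rep a 1 0 w]
      ring
    have hm : (fun x : ℂ => α * (a.re * x.re + a.im * x.im)
          + β * (a.re * x.re + a.im * x.im) / ‖x‖ ^ 2)
        = fun w => (((α : ℂ) * (starRingEnd ℂ) a) * w + ((β : ℂ) * a) * w⁻¹).re :=
      funext fun w => rep a α β w
    beta_reduce
    rw [hm, hu, fderiv_rad a 1 0 x hx0, fderiv_rad a α β x hx0, hx, hα, hβ]
    field_simp
    ring
  · -- flux at r1
    intro x hx
    have hx0 : x ≠ 0 := by
      intro h
      rw [h] at hx
      simp at hx
      exact hr1' hx.symm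
    have hm : (fun x : ℂ => α * (a.re * x.re + a.im * x.im)
          + β * (a.re * x.re + a.im * x.im) / ‖x‖ ^ 2)
        = fun w => (((α : ℂ) * (starRingEnd ℂ) a) * w + ((β : ℂ) * a) * w⁻¹).re :=
      funext fun w => rep a α β w
    have hi : (fun x : ℂ => γ * (a.re * x.re + a.im * x.im))
        = fun w => (((γ : ℂ) * (starRingEnd ℂ) a) * w + (((0:ℝ) : ℂ) * a) * w⁻¹).re := by
      funext w
      rw [← rep a γ 0 w]
      ring
    have hc3 : σs * (α - β / r1 ^ 2) = σc * γ := by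
      rw [hγ, hα, hβ]
      field_simp
      linear_combination hneutral
    beta_reduce
    rw [hm, hi, fderiv_rad a α β x hx0, fderiv_rad a γ 0 x hx0, hx]
    linear_combination (a.re * x.re + a.im * x.im) * hc3
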